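/- As ε → 0 in the reals, the product over primes satisfies Π_p [1 − (1 − p^{iε})²/(p−1)²] = 1 + c₀·ε² + i·Q·ε³ + O(ε⁴), where c₀ = Σ_p (log p)²/(p−1)² and Q = Σ_p (log p)³/(p−1)². -/

import Mathlib

open Real Complex Filter Asymptotics

lemma sumP (k : ℕ) (hk : k ≤ 4) :
    Summable (fun p : Nat.Primes => Real.log ((p : ℕ) : ℝ) ^ k / (((p : ℕ) : ℝ) - 1) ^ 2) := by
  have hs : Summable (fun p : Nat.Primes => 4 * 8 ^ k * ((p : ℕ) : ℝ) ^ (-(3:ℝ)/2)) :=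
    (Nat.Primes.summable_rpow.mpr (by norm_num)).mul_left _
  refine Summable.of_nonneg_of_le (fun p => ?_) (fun p => ?_) hs
  · positivity
  · have hp2 : (2:ℝ) ≤ ((p : ℕ) : ℝ) := by exact_mod_cast p.2.two_le
    have hp0 : (0:ℝ) < ((p : ℕ) : ℝ) := by linarith
    have hp1 : (1:ℝ) ≤ ((p : ℕ) : ℝ) := by linarith
    set x : ℝ := ((p : ℕ) : ℝ)
    have hlog : Real.log x ≤ 8 * x ^ ((8:ℝ)⁻¹) := by
      have := Real.log_le_rpow_div hp0.le (by norm_num : (0:ℝ) < (8:ℝ)⁻¹)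
      calc Real.log x ≤ x ^ ((8:ℝ)⁻¹) / (8:ℝ)⁻¹ := this
        _ = 8 * x ^ ((8:ℝ)⁻¹) := by ring
    have hlognn : 0 ≤ Real.log x := Real.log_nonneg hp1
    have hnum : Real.log x ^ k ≤ 8 ^ k * x ^ ((k : ℝ) / 8) := by
      calc Real.log x ^ k ≤ (8 * x ^ ((8:ℝ)⁻¹)) ^ k := pow_le_pow_left₀ hlognn hlog k
        _ = 8 ^ k * (x ^ ((8:ℝ)⁻¹)) ^ k := mul_pow _ _ _
        _ = 8 ^ k * x ^ ((k : ℝ) / 8) := by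
            rw [← Real.rpow_natCast (x ^ ((8:ℝ)⁻¹)) k, ← Real.rpow_mul hp0.le]
            ring_nf
    have hden : x ^ 2 / 4 ≤ (x - 1) ^ 2 := by nlinarith
    have hx2 : (0:ℝ) < x ^ 2 / 4 := by positivity
    calc Real.log x ^ k / (x - 1) ^ 2 ≤ (8 ^ k * x ^ ((k : ℝ) / 8)) / (x ^ 2 / 4) := by
          apply div_le_div₀ (by positivity) hnum hx2 hden
      _ = 4 * 8 ^ k * (x ^ ((k : ℝ) / 8) / x ^ 2) := by ring
      _ = 4 * 8 ^ k * x ^ ((k : ℝ) / 8 - 2) := by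
          rw [← Real.rpow_natCast x 2, ← Real.rpow_sub hp0]
          norm_num
      _ ≤ 4 * 8 ^ k * x ^ (-(3:ℝ)/2) := by
          have : ((k : ℝ) / 8 - 2) ≤ -(3:ℝ)/2 := by
            have : (k : ℝ) ≤ 4 := by exact_mod_cast hk
            linarith
          have := Real.rpow_le_rpow_of_exponent_le hp1 this
          nlinarith [Real.rpow_nonneg hp0.le ((k:ℝ)/8 - 2), pow_pos (by norm_num : (0:ℝ) < 8) k]

lemma abs_I_mul (θ : ℝ) : ‖Complex.I * (θ:ℂ)‖ = |θ| := by
  simp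

lemma norm_one_sub_exp_le (θ : ℝ) : ‖1 - Complex.exp (Complex.I * θ)‖ ≤ 2 * |θ| := by
  rcases le_or_gt |θ| 1 with h | h
  · have hx : ‖Complex.I * (θ:ℂ)‖ ≤ 1 := by rw [abs_I_mul]; exact h
    have := Complex.norm_exp_sub_one_le hx
    rw [abs_I_mul] at this
    rw [norm_sub_rev]
    exact this
  · have h1 : ‖Complex.exp (Complex.I * θ)‖ = 1 := by
      rw [Complex.norm_exp]
      simp [Complex.mul_re]
    calc ‖1 - Complex.exp (Complex.I * θ)‖ ≤ ‖(1:ℂ)‖ + ‖Complex.exp (Complex.I * θ)‖ :=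
          norm_sub_le _ _
      _ = 2 := by rw [h1]; norm_num
      _ ≤ 2 * |θ| := by nlinarith

lemma Ebound (θ : ℝ) :
    ‖(1 - Complex.exp (Complex.I * θ)) ^ 2 + (θ:ℂ) ^ 2 + Complex.I * (θ:ℂ) ^ 3‖ ≤ 70 * θ ^ 4 := by
  have hI3 : Complex.I ^ 3 = -Complex.I := by
    rw [pow_succ, Complex.I_sq]; ring
  set x : ℂ := Complex.I * θ with hx
  have hkey : (1 - Complex.exp x) ^ 2 + (θ:ℂ) ^ 2 + Complex.I * (θ:ℂ) ^ 3
      = -2 * (Complex.exp x - (1 + x + x^2/2 + x^3/6))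
        + (Complex.exp (2*x) - (1 + 2*x + (2*x)^2/2 + (2*x)^3/6)) := by
    have hsq : Complex.exp x ^ 2 = Complex.exp (2 * x) := by
      rw [← Complex.exp_nat_mul]; norm_num
    have hθ2 : (θ:ℂ)^2 = -x^2 := by rw [hx, mul_pow, Complex.I_sq]; ring
    have hθ3 : Complex.I * (θ:ℂ)^3 = -x^3 := by rw [hx, mul_pow, hI3]; ring
    rw [hθ2, hθ3, ← hsq]; ring
  rw [hkey]
  have h4 : (0:ℝ) ≤ θ ^ 4 := by positivity
  rcases le_or_gt |θ| (1/2) with h | h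
  · have hax : ‖x‖ ≤ 1 := by rw [hx, abs_I_mul]; linarith
    have hax2 : ‖2*x‖ ≤ 1 := by
      rw [norm_mul, hx, abs_I_mul]
      simpa using by linarith
    have hb1 := Complex.exp_bound hax (by norm_num : 0 < 4)
    have hb2 := Complex.exp_bound hax2 (by norm_num : 0 < 4)
    have hsum : ∀ y : ℂ, ∑ i ∈ Finset.range 4, y ^ i / (Nat.factorial i : ℂ)
        = 1 + y + y^2/2 + y^3/6 := by
      intro y
      rw [Finset.sum_range_succ, Finset.sum_range_succ, Finset.sum_range_succ,
        Finset.sum_range_one]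
      norm_num [Nat.factorial]
    rw [hsum] at hb1 hb2
    have haxθ : ‖x‖ = |θ| := by rw [hx, abs_I_mul]
    have hax2θ : ‖2*x‖ = 2 * |θ| := by
      rw [norm_mul, hx, abs_I_mul]; simp
    rw [haxθ] at hb1
    rw [hax2θ] at hb2
    have hc : ((4:ℕ).succ : ℝ) * (((Nat.factorial 4 : ℕ) : ℝ) * (4:ℕ))⁻¹ ≤ 1 := by
      norm_num [Nat.factorial]
    have hA := hb1.trans (by nlinarith [pow_nonneg (abs_nonneg θ) 4] :
      |θ| ^ 4 * (((4:ℕ).succ : ℝ) * (((Nat.factorial 4:ℕ):ℝ) * (4:ℕ))⁻¹) ≤ |θ| ^ 4)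
    have hB := hb2.trans (by nlinarith [pow_nonneg (mul_nonneg (by norm_num : (0:ℝ) ≤ 2) (abs_nonneg θ)) 4] :
      (2 * |θ|) ^ 4 * (((4:ℕ).succ : ℝ) * (((Nat.factorial 4:ℕ):ℝ) * (4:ℕ))⁻¹) ≤ (2 * |θ|) ^ 4)
    have habs4 : |θ| ^ 4 = θ ^ 4 := by
      rw [← _root_.abs_pow]; exact abs_of_nonneg h4
    calc ‖-2 * (Complex.exp x - (1 + x + x^2/2 + x^3/6))
          + (Complex.exp (2*x) - (1 + 2*x + (2*x)^2/2 + (2*x)^3/6))‖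
        ≤ ‖-2 * (Complex.exp x - (1 + x + x^2/2 + x^3/6))‖
          + ‖Complex.exp (2*x) - (1 + 2*x + (2*x)^2/2 + (2*x)^3/6)‖ :=
          norm_add_le _ _
      _ = 2 * ‖Complex.exp x - (1 + x + x^2/2 + x^3/6)‖
          + ‖Complex.exp (2*x) - (1 + 2*x + (2*x)^2/2 + (2*x)^3/6)‖ := by
          rw [norm_mul]; norm_num
      _ ≤ 2 * |θ| ^ 4 + (2 * |θ|) ^ 4 := by linarith
      _ ≤ 70 * θ ^ 4 := by rw [← habs4]; nlinarith [abs_nonneg θ]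
  · have hexp1 : ‖Complex.exp x‖ = 1 := by
      rw [hx, Complex.norm_exp]
      simp [Complex.mul_re]
    have hb : ‖(1 - Complex.exp x) ^ 2‖ ≤ 4 := by
      rw [norm_pow]
      have h1 : ‖1 - Complex.exp x‖ ≤ 2 := by
        refine (norm_sub_le _ _).trans ?_
        rw [hexp1]; norm_num
      nlinarith [norm_nonneg (1 - Complex.exp x)]
    rw [← hkey]
    have hsq2 : (1/4 : ℝ) ≤ θ ^ 2 := by nlinarith [_root_.sq_abs θ, h.le, abs_nonneg θ]
    have hθ4 : (1/16 : ℝ) ≤ θ ^ 4 := by nlinarith [hsq2]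
    have e1 : ‖(θ:ℂ) ^ 2‖ = θ ^ 2 := by
      rw [norm_pow, Complex.norm_real, Real.norm_eq_abs, _root_.sq_abs]
    have e2 : ‖Complex.I * (θ:ℂ) ^ 3‖ = |θ| ^ 3 := by
      rw [norm_mul, norm_pow, Complex.norm_real, Complex.norm_I, one_mul, Real.norm_eq_abs]
    calc ‖(1 - Complex.exp x) ^ 2 + (θ:ℂ) ^ 2 + Complex.I * (θ:ℂ) ^ 3‖
        ≤ ‖(1 - Complex.exp x) ^ 2 + (θ:ℂ) ^ 2‖ + ‖Complex.I * (θ:ℂ) ^ 3‖ := norm_add_le _ _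
      _ ≤ ‖(1 - Complex.exp x) ^ 2‖ + ‖(θ:ℂ) ^ 2‖ + ‖Complex.I * (θ:ℂ) ^ 3‖ := by
          have := norm_add_le ((1 - Complex.exp x) ^ 2) ((θ:ℂ) ^ 2)
          linarith
      _ = ‖(1 - Complex.exp x) ^ 2‖ + θ ^ 2 + |θ| ^ 3 := by rw [e1, e2]
      _ ≤ 4 + θ ^ 2 + |θ| ^ 3 := by linarith
      _ ≤ 70 * θ ^ 4 := by
          have habs4 : |θ| ^ 4 = θ ^ 4 := by
            rw [← _root_.abs_pow]; exact abs_of_nonneg h4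
          have t3 : (0:ℝ) ≤ |θ| ^ 3 * (2 * |θ| - 1) :=
            mul_nonneg (pow_nonneg (abs_nonneg θ) 3) (by linarith [h.le])
          have t2 : (0:ℝ) ≤ θ ^ 2 * (4 * θ ^ 2 - 1) :=
            mul_nonneg (sq_nonneg θ) (by linarith [hsq2])
          nlinarith [hθ4, abs_nonneg θ]

lemma prod_one_add_sub_one_le {ι : Type*} (s : Finset ι) (a : ι → ℂ) :
    ‖∏ i ∈ s, (1 + a i) - 1‖ ≤ ∏ i ∈ s, (1 + ‖a i‖) - 1 := by
  classical
  induction s using Finset.induction_on with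
  | empty => simp
  | insert _ _ hi ih =>
    rename_i j t
    rw [Finset.prod_insert hi, Finset.prod_insert hi]
    have key : (1 + a j) * ∏ i ∈ t, (1 + a i) - 1
        = (∏ i ∈ t, (1 + a i) - 1) + a j * ∏ i ∈ t, (1 + a i) := by ring
    have hn : ‖∏ i ∈ t, (1 + a i)‖ ≤ ∏ i ∈ t, (1 + ‖a i‖) := by
      calc ‖∏ i ∈ t, (1 + a i)‖ = ∏ i ∈ t, ‖1 + a i‖ := norm_prod _ _
        _ ≤ ∏ i ∈ t, (1 + ‖a i‖) := by
            apply Finset.prod_le_prod (fun i _ => norm_nonneg _)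
            intro i _
            calc ‖1 + a i‖ ≤ ‖(1:ℂ)‖ + ‖a i‖ := norm_add_le _ _
              _ = 1 + ‖a i‖ := by norm_num
    calc ‖(1 + a j) * ∏ i ∈ t, (1 + a i) - 1‖
        ≤ ‖∏ i ∈ t, (1 + a i) - 1‖ + ‖a j‖ * ‖∏ i ∈ t, (1 + a i)‖ := by
          rw [key]; refine (norm_add_le _ _).trans ?_; rw [norm_mul]
      _ ≤ (∏ i ∈ t, (1 + ‖a i‖) - 1) + ‖a j‖ * ∏ i ∈ t, (1 + ‖a i‖) := by
          gcongr
      _ = (1 + ‖a j‖) * ∏ i ∈ t, (1 + ‖a i‖) - 1 := by ring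

lemma prod_one_add_sub_one_sub_sum_le {ι : Type*} (s : Finset ι) (a : ι → ℂ) :
    ‖∏ i ∈ s, (1 + a i) - 1 - ∑ i ∈ s, a i‖
      ≤ ∏ i ∈ s, (1 + ‖a i‖) - 1 - ∑ i ∈ s, ‖a i‖ := by
  classical
  induction s using Finset.induction_on with
  | empty => simp
  | insert _ _ hi ih =>
    rename_i j t
    rw [Finset.prod_insert hi, Finset.prod_insert hi, Finset.sum_insert hi,
      Finset.sum_insert hi]
    have key : (1 + a j) * ∏ i ∈ t, (1 + a i) - 1 - (a j + ∑ i ∈ t, a i)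
        = (∏ i ∈ t, (1 + a i) - 1 - ∑ i ∈ t, a i) + a j * (∏ i ∈ t, (1 + a i) - 1) := by
      ring
    calc ‖(1 + a j) * ∏ i ∈ t, (1 + a i) - 1 - (a j + ∑ i ∈ t, a i)‖
        ≤ ‖∏ i ∈ t, (1 + a i) - 1 - ∑ i ∈ t, a i‖ + ‖a j‖ * ‖∏ i ∈ t, (1 + a i) - 1‖ := by
          rw [key]; refine (norm_add_le _ _).trans ?_; rw [norm_mul]
      _ ≤ (∏ i ∈ t, (1 + ‖a i‖) - 1 - ∑ i ∈ t, ‖a i‖)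
            + ‖a j‖ * (∏ i ∈ t, (1 + ‖a i‖) - 1) := by
          gcongr
          exact prod_one_add_sub_one_le t a
      _ = (1 + ‖a j‖) * ∏ i ∈ t, (1 + ‖a i‖) - 1 - (‖a j‖ + ∑ i ∈ t, ‖a i‖) := by ring

lemma prod_one_add_le_exp {ι : Type*} (s : Finset ι) (x : ι → ℝ) (hx : ∀ i, 0 ≤ x i) :
    ∏ i ∈ s, (1 + x i) ≤ Real.exp (∑ i ∈ s, x i) := by
  rw [Real.exp_sum]
  apply Finset.prod_le_prod (fun i _ => by linarith [hx i])
  intro i _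
  linarith [Real.add_one_le_exp (x i)]

lemma exp_sub_one_sub_le (S : ℝ) (hS : 0 ≤ S) : Real.exp S - 1 - S ≤ S ^ 2 * Real.exp S := by
  rcases le_or_gt S 1 with h | h
  · have h1 : 1 - S ≤ Real.exp (-S) := by linarith [Real.add_one_le_exp (-S)]
    have h2 : (1 + S) * (1 - S) ≤ (1 + S) * Real.exp (-S) :=
      mul_le_mul_of_nonneg_left h1 (by linarith)
    have h3 : Real.exp (-S) * Real.exp S = 1 := by
      rw [← Real.exp_add]; simp
    nlinarith [Real.exp_pos S, h2]
  · have : (0:ℝ) ≤ (S ^ 2 - 1) * Real.exp S :=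
      mul_nonneg (by nlinarith) (Real.exp_pos S).le
    nlinarith [Real.exp_pos S]

lemma multipliable_one_add {ι : Type*} {a : ι → ℂ} (hs : Summable fun i => ‖a i‖)
    (hh : ∀ i, ‖a i‖ ≤ 1/2) : Multipliable fun i => 1 + a i := by
  have hne : ∀ i, 1 + a i ≠ 0 := by
    intro i h
    have : ‖a i‖ = 1 := by
      have : a i = -1 := by linear_combination h
      rw [this]; norm_num
    linarith [hh i]
  have hlog : Summable fun i => Complex.log (1 + a i) := by
    refine Summable.of_norm (Summable.of_nonneg_of_le (fun i => norm_nonneg _)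
      (fun i => ?_) (hs.mul_left (3/2)))
    exact Complex.norm_log_one_add_half_le_self (hh i)
  exact Complex.multipliable_of_summable_log hlog

lemma tprod_est {ι : Type*} {a : ι → ℂ} (hs : Summable fun i => ‖a i‖)
    (hm : Multipliable fun i => 1 + a i) :
    ‖(∏' i, (1 + a i)) - 1 - ∑' i, a i‖
      ≤ (∑' i, ‖a i‖) ^ 2 * Real.exp (∑' i, ‖a i‖) := by
  classical
  set T := ∑' i, ‖a i‖ with hT
  have hT0 : 0 ≤ T := tsum_nonneg fun i => norm_nonneg _
  have ha : Summable a := hs.of_norm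
  have htend : Tendsto (fun s : Finset ι => ‖∏ i ∈ s, (1 + a i) - 1 - ∑ i ∈ s, a i‖)
      atTop (nhds ‖(∏' i, (1 + a i)) - 1 - ∑' i, a i‖) :=
    ((hm.hasProd.sub tendsto_const_nhds).sub ha.hasSum).norm
  refine le_of_tendsto htend (Filter.Eventually.of_forall fun s => ?_)
  have hSle : ∑ i ∈ s, ‖a i‖ ≤ T := Summable.sum_le_tsum s (fun i _ => norm_nonneg _) hs
  have hS0 : 0 ≤ ∑ i ∈ s, ‖a i‖ := Finset.sum_nonneg fun i _ => norm_nonneg _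
  calc ‖∏ i ∈ s, (1 + a i) - 1 - ∑ i ∈ s, a i‖
      ≤ ∏ i ∈ s, (1 + ‖a i‖) - 1 - ∑ i ∈ s, ‖a i‖ := prod_one_add_sub_one_sub_sum_le s a
    _ ≤ Real.exp (∑ i ∈ s, ‖a i‖) - 1 - ∑ i ∈ s, ‖a i‖ := by
        have := prod_one_add_le_exp s (fun i => ‖a i‖) (fun i => norm_nonneg _)
        linarith
    _ ≤ (∑ i ∈ s, ‖a i‖) ^ 2 * Real.exp (∑ i ∈ s, ‖a i‖) := exp_sub_one_sub_le _ hS0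
    _ ≤ T ^ 2 * Real.exp T := by gcongr

section Main

noncomputable def Lp (p : Nat.Primes) : ℝ := Real.log ((p : ℕ) : ℝ)
noncomputable def dp (p : Nat.Primes) : ℝ := (((p : ℕ) : ℝ) - 1) ^ 2

lemma two_le_p (p : Nat.Primes) : (2:ℝ) ≤ ((p : ℕ) : ℝ) := by exact_mod_cast p.2.two_le
lemma dp_one_le (p : Nat.Primes) : 1 ≤ dp p := by
  have := two_le_p p; unfold dp; nlinarith
lemma dp_pos (p : Nat.Primes) : 0 < dp p := lt_of_lt_of_le one_pos (dp_one_le p)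
lemma Lp_nonneg (p : Nat.Primes) : 0 ≤ Lp p := Real.log_nonneg (by linarith [two_le_p p])
lemma Lp_le (p : Nat.Primes) : Lp p ≤ ((p : ℕ) : ℝ) - 1 :=
  Real.log_le_sub_one_of_pos (by linarith [two_le_p p])

set_option maxHeartbeats 1000000 in
lemma main_est (ε : ℝ) (hε : |ε| ≤ 1/4) :
    ‖(∏' p : Nat.Primes,
        (1 - (1 - Complex.exp (Complex.I * ε * Real.log ((p : ℕ) : ℝ))) ^ 2
          / ((((p : ℕ) : ℝ) : ℂ) - 1) ^ 2))
      - 1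
      - ((∑' p : Nat.Primes, Lp p ^ 2 / dp p : ℝ) : ℂ) * (ε:ℂ) ^ 2
      - Complex.I * ((∑' p : Nat.Primes, Lp p ^ 3 / dp p : ℝ) : ℂ) * (ε:ℂ) ^ 3‖
    ≤ (16 * (∑' p : Nat.Primes, Lp p ^ 2 / dp p) ^ 2
          * Real.exp (∑' p : Nat.Primes, Lp p ^ 2 / dp p)
        + 70 * (∑' p : Nat.Primes, Lp p ^ 4 / dp p)) * ε ^ 4 := by
  classical
  set c2 : ℝ := ∑' p : Nat.Primes, Lp p ^ 2 / dp p with hc2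
  set c3 : ℝ := ∑' p : Nat.Primes, Lp p ^ 3 / dp p with hc3
  set c4 : ℝ := ∑' p : Nat.Primes, Lp p ^ 4 / dp p with hc4
  have S2 : Summable (fun p : Nat.Primes => Lp p ^ 2 / dp p) := sumP 2 (by norm_num)
  have S3 : Summable (fun p : Nat.Primes => Lp p ^ 3 / dp p) := sumP 3 (by norm_num)
  have S4 : Summable (fun p : Nat.Primes => Lp p ^ 4 / dp p) := sumP 4 (by norm_num)
  have hc2nn : 0 ≤ c2 := tsum_nonneg fun p => by
    have := dp_pos p; have := Lp_nonneg p; positivity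
  have hc4nn : 0 ≤ c4 := tsum_nonneg fun p => by
    have := dp_pos p; have := Lp_nonneg p; positivity
  have hε2 : ε ^ 2 ≤ 1/16 := by
    rw [← _root_.sq_abs]; nlinarith [abs_nonneg ε]
  have hε40 : 0 ≤ ε ^ 4 := by positivity
  -- the factors
  set a : Nat.Primes → ℂ := fun p =>
    -((1 - Complex.exp (Complex.I * ((ε * Lp p : ℝ) : ℂ))) ^ 2 / ((dp p : ℝ) : ℂ)) with ha
  have hfactor : ∀ p : Nat.Primes,
      (1 - (1 - Complex.exp (Complex.I * ε * Real.log ((p : ℕ) : ℝ))) ^ 2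
        / ((((p : ℕ) : ℝ) : ℂ) - 1) ^ 2) = 1 + a p := by
    intro p
    have h1 : Complex.I * (ε:ℂ) * ((Real.log ((p : ℕ) : ℝ) : ℝ) : ℂ)
        = Complex.I * ((ε * Lp p : ℝ) : ℂ) := by unfold Lp; push_cast; ring
    have h2 : ((((p : ℕ) : ℝ) : ℂ) - 1) ^ 2 = ((dp p : ℝ) : ℂ) := by
      unfold dp; push_cast; ring
    rw [ha, h1, h2]; ring
  -- norm of denominators
  have hd : ∀ p : Nat.Primes, ‖((dp p : ℝ) : ℂ)‖ = dp p := by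
    intro p; rw [Complex.norm_real, Real.norm_eq_abs]; exact abs_of_pos (dp_pos p)
  -- per-prime bound on ‖a p‖
  have ha_le : ∀ p : Nat.Primes, ‖a p‖ ≤ 4 * ε ^ 2 * (Lp p ^ 2 / dp p) := by
    intro p
    rw [ha]
    have h1 : ‖1 - Complex.exp (Complex.I * ((ε * Lp p : ℝ) : ℂ))‖ ≤ 2 * |ε * Lp p| :=
      norm_one_sub_exp_le (ε * Lp p)
    rw [norm_neg, norm_div, norm_pow, hd]
    rw [div_le_iff₀ (dp_pos p)]
    have h2 : ‖1 - Complex.exp (Complex.I * ((ε * Lp p : ℝ) : ℂ))‖ ^ 2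
        ≤ (2 * |ε * Lp p|) ^ 2 := by
      apply pow_le_pow_left₀ (norm_nonneg _) h1
    have h3 : (2 * |ε * Lp p|) ^ 2 = 4 * ε ^ 2 * Lp p ^ 2 := by
      rw [mul_pow, _root_.sq_abs, mul_pow]; ring
    calc ‖1 - Complex.exp (Complex.I * ((ε * Lp p : ℝ) : ℂ))‖ ^ 2
        ≤ 4 * ε ^ 2 * Lp p ^ 2 := by rw [← h3]; exact h2
      _ = 4 * ε ^ 2 * (Lp p ^ 2 / dp p) * dp p := by
          conv_rhs => rw [mul_assoc, div_mul_cancel₀ _ (ne_of_gt (dp_pos p))]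
  have ha_half : ∀ p : Nat.Primes, ‖a p‖ ≤ 1/2 := by
    intro p
    refine (ha_le p).trans ?_
    have h1 : Lp p ^ 2 ≤ dp p := by
      unfold dp; nlinarith [Lp_le p, Lp_nonneg p, two_le_p p]
    have h2 : Lp p ^ 2 / dp p ≤ 1 := (div_le_one (dp_pos p)).mpr h1
    have hnn : 0 ≤ Lp p ^ 2 / dp p := div_nonneg (sq_nonneg _) (dp_pos p).le
    have h4 := mul_le_mul hε2 h2 hnn (by norm_num : (0:ℝ) ≤ 1/16)
    linarith
  -- summability of norms
  have hsa : Summable (fun p : Nat.Primes => ‖a p‖) := by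
    refine Summable.of_nonneg_of_le (fun p => norm_nonneg _) ha_le ?_
    exact S2.mul_left (4 * ε ^ 2)
  have hT_le : (∑' p : Nat.Primes, ‖a p‖) ≤ 4 * ε ^ 2 * c2 := by
    rw [hc2, ← tsum_mul_left]
    exact Summable.tsum_le_tsum ha_le hsa (by exact S2.mul_left (4 * ε ^ 2))
  have hT0 : 0 ≤ ∑' p : Nat.Primes, ‖a p‖ := tsum_nonneg fun p => norm_nonneg _
  -- the product estimate
  have hm : Multipliable fun p : Nat.Primes => 1 + a p := multipliable_one_add hsa ha_half
  have hp1 : ‖(∏' p : Nat.Primes, (1 + a p)) - 1 - ∑' p : Nat.Primes, a p‖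
      ≤ 16 * c2 ^ 2 * Real.exp c2 * ε ^ 4 := by
    refine (tprod_est hsa hm).trans ?_
    have h1 : 4 * ε ^ 2 * c2 ≤ c2 := by nlinarith [hε2, hc2nn]
    calc (∑' p : Nat.Primes, ‖a p‖) ^ 2 * Real.exp (∑' p : Nat.Primes, ‖a p‖)
        ≤ (4 * ε ^ 2 * c2) ^ 2 * Real.exp c2 := by
          have he : Real.exp (∑' p : Nat.Primes, ‖a p‖) ≤ Real.exp c2 :=
            Real.exp_le_exp.mpr (hT_le.trans h1)
          have h2 : (∑' p : Nat.Primes, ‖a p‖) ^ 2 ≤ (4 * ε ^ 2 * c2) ^ 2 := by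
            apply pow_le_pow_left₀ hT0 hT_le
          exact mul_le_mul h2 he (Real.exp_pos _).le (by positivity)
      _ = 16 * c2 ^ 2 * Real.exp c2 * (ε ^ 2) ^ 2 := by ring
      _ ≤ 16 * c2 ^ 2 * Real.exp c2 * ε ^ 4 := by rw [← pow_mul]
  -- the linearized terms
  set b : Nat.Primes → ℂ := fun p =>
    ((ε ^ 2 * (Lp p ^ 2 / dp p) : ℝ) : ℂ)
      + Complex.I * ((ε ^ 3 * (Lp p ^ 3 / dp p) : ℝ) : ℂ) with hb
  have hdiff : ∀ p : Nat.Primes, ‖a p - b p‖ ≤ 70 * ε ^ 4 * (Lp p ^ 4 / dp p) := by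
    intro p
    set θ : ℝ := ε * Lp p with hθ
    have habd : a p - b p
        = -(((1 - Complex.exp (Complex.I * (θ:ℂ))) ^ 2 + (θ:ℂ) ^ 2 + Complex.I * (θ:ℂ) ^ 3)
            / ((dp p : ℝ) : ℂ)) := by
      rw [ha, hb, hθ]
      have hd0 : ((dp p : ℝ) : ℂ) ≠ 0 := by
        exact_mod_cast ne_of_gt (by exact_mod_cast dp_pos p : (0:ℝ) < dp p)
      field_simp
      push_cast
      ring_nf
      rw [mul_inv_cancel_right₀ hd0, mul_inv_cancel_right₀ hd0]
    rw [habd, norm_neg, norm_div, hd, div_le_iff₀ (dp_pos p)]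
    calc ‖(1 - Complex.exp (Complex.I * (θ:ℂ))) ^ 2 + (θ:ℂ) ^ 2 + Complex.I * (θ:ℂ) ^ 3‖
        ≤ 70 * θ ^ 4 := Ebound θ
      _ = 70 * ε ^ 4 * Lp p ^ 4 := by rw [hθ]; ring
      _ = 70 * ε ^ 4 * (Lp p ^ 4 / dp p) * dp p := by
          conv_rhs => rw [mul_assoc, div_mul_cancel₀ _ (ne_of_gt (dp_pos p))]
  have hsb : Summable b := by
    apply Summable.add
    · exact (Complex.summable_ofReal).mpr (S2.mul_left (ε ^ 2))
    · exact ((Complex.summable_ofReal).mpr (S3.mul_left (ε ^ 3))).mul_left _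
  have hsd : Summable (fun p : Nat.Primes => ‖a p - b p‖) := by
    refine Summable.of_nonneg_of_le (fun p => norm_nonneg _) hdiff ?_
    exact S4.mul_left (70 * ε ^ 4)
  have hp2 : ‖(∑' p : Nat.Primes, a p) - ∑' p : Nat.Primes, b p‖ ≤ 70 * c4 * ε ^ 4 := by
    rw [← Summable.tsum_sub hsa.of_norm hsb]
    refine (norm_tsum_le_tsum_norm hsd).trans ?_
    calc ∑' p : Nat.Primes, ‖a p - b p‖
        ≤ ∑' p : Nat.Primes, 70 * ε ^ 4 * (Lp p ^ 4 / dp p) :=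
          Summable.tsum_le_tsum hdiff hsd (by exact S4.mul_left (70 * ε ^ 4))
      _ = 70 * ε ^ 4 * c4 := by rw [tsum_mul_left]
      _ = 70 * c4 * ε ^ 4 := by ring
  have hbsum : (∑' p : Nat.Primes, b p) = (c2 : ℂ) * (ε:ℂ) ^ 2 + Complex.I * (c3 : ℂ) * (ε:ℂ) ^ 3 := by
    rw [hb, Summable.tsum_add ((Complex.summable_ofReal).mpr (S2.mul_left (ε ^ 2)))
      (((Complex.summable_ofReal).mpr (S3.mul_left (ε ^ 3))).mul_left _),
      tsum_mul_left, ← Complex.ofReal_tsum, ← Complex.ofReal_tsum, tsum_mul_left, tsum_mul_left,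
      hc2, hc3]
    push_cast
    ring
  -- put it together
  have hrw : (∏' p : Nat.Primes,
      (1 - (1 - Complex.exp (Complex.I * ε * Real.log ((p : ℕ) : ℝ))) ^ 2
        / ((((p : ℕ) : ℝ) : ℂ) - 1) ^ 2)) = ∏' p : Nat.Primes, (1 + a p) :=
    tprod_congr hfactor
  rw [hrw]
  have hsplit : (∏' p : Nat.Primes, (1 + a p)) - 1 - (c2 : ℂ) * (ε:ℂ) ^ 2
      - Complex.I * (c3 : ℂ) * (ε:ℂ) ^ 3
      = ((∏' p : Nat.Primes, (1 + a p)) - 1 - ∑' p : Nat.Primes, a p)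
        + ((∑' p : Nat.Primes, a p) - ∑' p : Nat.Primes, b p) := by
    rw [hbsum]; ring
  rw [hsplit]
  calc ‖_ + _‖ ≤ _ := norm_add_le _ _
    _ ≤ 16 * c2 ^ 2 * Real.exp c2 * ε ^ 4 + 70 * c4 * ε ^ 4 := add_le_add hp1 hp2
    _ = (16 * c2 ^ 2 * Real.exp c2 + 70 * c4) * ε ^ 4 := by ring

end Main

/-- Expansion of the Hardy–Littlewood product as `ε → 0`:
`Π_p [1 − (1 − p^{iε})²/(p−1)²] = 1 + c₀ ε² + i Q ε³ + O(ε⁴)`,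
with `c₀ = Σ_p (log p)²/(p−1)²` and `Q = Σ_p (log p)³/(p−1)²`. -/
theorem hl_product_expansion :
    (fun ε : ℝ =>
        (∏' p : Nat.Primes,
            (1 - (1 - Complex.exp (Complex.I * ε * Real.log ((p : ℕ) : ℝ))) ^ 2
              / ((((p : ℕ) : ℝ) : ℂ) - 1) ^ 2))
          - 1
          - ((∑' p : Nat.Primes,
               Real.log ((p : ℕ) : ℝ) ^ 2 / (((p : ℕ) : ℝ) - 1) ^ 2 : ℝ) : ℂ) * ε ^ 2
          - Complex.I * ((∑' p : Nat.Primes,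
               Real.log ((p : ℕ) : ℝ) ^ 3 / (((p : ℕ) : ℝ) - 1) ^ 2 : ℝ) : ℂ) * ε ^ 3)
      =O[nhds 0] fun ε : ℝ => ε ^ 4 := by
  rw [isBigO_iff]
  refine ⟨16 * (∑' p : Nat.Primes, Lp p ^ 2 / dp p) ^ 2
      * Real.exp (∑' p : Nat.Primes, Lp p ^ 2 / dp p)
      + 70 * (∑' p : Nat.Primes, Lp p ^ 4 / dp p), ?_⟩
  have hev : ∀ᶠ ε : ℝ in nhds 0, |ε| ≤ 1/4 := by
    filter_upwards [Metric.ball_mem_nhds (0:ℝ) (by norm_num : (0:ℝ) < 1/4)] with ε hε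
    rw [Metric.mem_ball, Real.dist_eq, sub_zero] at hε
    exact hε.le
  filter_upwards [hev] with ε hε
  have h := main_est ε hε
  have hL : ∀ p : Nat.Primes, Lp p = Real.log ((p : ℕ) : ℝ) := fun p => rfl
  have hD : ∀ p : Nat.Primes, dp p = (((p : ℕ) : ℝ) - 1) ^ 2 := fun p => rfl
  simp only [Lp, dp] at h
  have hnorm : ‖(ε : ℝ) ^ 4‖ = ε ^ 4 := by
    rw [Real.norm_eq_abs]; exact abs_of_nonneg (by positivity)
  rw [hnorm]
  exact h
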